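/- Let M be a d×d real positive semidefinite matrix with trace 1, and let z ∈ ℝ^d be a unit vector with zᵀ M z ≥ 1 − ε for some ε ∈ [0,1]. Then the top unit eigenvector v₁ of M satisfies ⟨v₁, z⟩² ≥ 1 − 2ε. -/

import Mathlib

open Matrix

/-- If `M` is PSD with trace 1, `z` is a unit vector with `zᵀ M z ≥ 1 − ε`, then the top
unit eigenvector `v` of `M` satisfies `⟨v, z⟩² ≥ 1 − 2ε`. -/
theorem top_eigenvector_correlation {d : ℕ}
    (M : Matrix (Fin d) (Fin d) ℝ) (hM : M.PosSemidef) (htr : M.trace = 1)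
    (z : Fin d → ℝ) (hz : ∑ i, z i ^ 2 = 1)
    (ε : ℝ) (hε0 : 0 ≤ ε) (hε1 : ε ≤ 1)
    (hzM : 1 - ε ≤ z ⬝ᵥ M.mulVec z)
    (lam : ℝ) (v : Fin d → ℝ) (hv : ∑ i, v i ^ 2 = 1)
    (heig : M.mulVec v = lam • v)
    (hmax : ∀ (μ : ℝ) (w : Fin d → ℝ), w ≠ 0 → M.mulVec w = μ • w → μ ≤ lam) :
    1 - 2 * ε ≤ (∑ i, v i * z i) ^ 2 := by
  rcases le_or_gt (1/2 : ℝ) ε with hhalf | hhalf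
  · nlinarith [sq_nonneg (∑ i, v i * z i)]
  have hH := hM.1
  set b := hH.eigenvectorBasis with hb
  set μ := hH.eigenvalues with hμ
  have h1 : ∀ i, M *ᵥ (b i) = μ i • (b i) := fun i => hH.mulVec_eigenvectorBasis i
  have hentry : ∀ i j, M i j = M j i := by
    intro i j
    have := congrFun (congrFun hH i) j
    simpa using this.symm
  -- the symmetric quadratic-form move
  have hsym : ∀ (x : Fin d → ℝ) (i : Fin d),
      ∑ j, b i j * (M *ᵥ x) j = μ i * ∑ j, b i j * x j := by
    intro x i
    have hcol : ∀ k, ∑ j, b i j * M j k = μ i * b i k := by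
      intro k
      have h := congrFun (h1 i) k
      have h' : ∑ j, M k j * b i j = μ i * b i k := by
        simpa [mulVec, dotProduct] using h
      calc ∑ j, b i j * M j k = ∑ j, M k j * b i j := by
            refine Finset.sum_congr rfl fun j _ => ?_
            rw [hentry j k, mul_comm]
        _ = μ i * b i k := h'
    calc ∑ j, b i j * (M *ᵥ x) j
        = ∑ j, ∑ k, b i j * (M j k * x k) := by
          refine Finset.sum_congr rfl fun j _ => ?_
          rw [mulVec, dotProduct, Finset.mul_sum]
      _ = ∑ k, ∑ j, b i j * (M j k * x k) := Finset.sum_comm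
      _ = ∑ k, (∑ j, b i j * M j k) * x k := by
          refine Finset.sum_congr rfl fun k _ => ?_
          rw [Finset.sum_mul]
          exact Finset.sum_congr rfl fun j _ => (mul_assoc _ _ _).symm
      _ = ∑ k, μ i * b i k * x k := by
          exact Finset.sum_congr rfl fun k _ => by rw [hcol]
      _ = μ i * ∑ k, b i k * x k := by
          rw [Finset.mul_sum]
          exact Finset.sum_congr rfl fun k _ => (mul_assoc _ _ _)
  have hinner : ∀ (x y : EuclideanSpace ℝ (Fin d)), @inner ℝ _ _ x y = ∑ i, x i * y i := by
    intro x y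
    simp [PiLp.inner_apply, RCLike.inner_apply, conj_trivial]
    exact Finset.sum_congr rfl fun i _ => mul_comm _ _
  set c : Fin d → ℝ := fun i => ∑ j, b i j * z j with hc
  set e : Fin d → ℝ := fun i => ∑ j, b i j * v j with he
  -- Parseval facts
  have hzc : ∑ i, c i ^ 2 = 1 := by
    have h := b.sum_inner_mul_inner (WithLp.toLp 2 z) (WithLp.toLp 2 z)
    simp only [hinner, WithLp.ofLp_toLp] at h
    calc ∑ i, c i ^ 2 = ∑ i, (∑ j, z j * b i j) * (∑ j, b i j * z j) := by
          refine Finset.sum_congr rfl fun i _ => ?_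
          rw [sq]
          congr 1
          exact Finset.sum_congr rfl fun j _ => mul_comm _ _
      _ = ∑ i, z i * z i := h
      _ = ∑ i, z i ^ 2 := by simp [sq]
      _ = 1 := hz
  have hve : ∑ i, e i ^ 2 = 1 := by
    have h := b.sum_inner_mul_inner (WithLp.toLp 2 v) (WithLp.toLp 2 v)
    simp only [hinner, WithLp.ofLp_toLp] at h
    calc ∑ i, e i ^ 2 = ∑ i, (∑ j, v j * b i j) * (∑ j, b i j * v j) := by
          refine Finset.sum_congr rfl fun i _ => ?_
          rw [sq]
          congr 1
          exact Finset.sum_congr rfl fun j _ => mul_comm _ _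
      _ = ∑ i, v i * v i := h
      _ = ∑ i, v i ^ 2 := by simp [sq]
      _ = 1 := hv
  have halpha : ∑ i, v i * z i = ∑ i, e i * c i := by
    have h := b.sum_inner_mul_inner (WithLp.toLp 2 v) (WithLp.toLp 2 z)
    simp only [hinner, WithLp.ofLp_toLp] at h
    rw [← h]
    refine Finset.sum_congr rfl fun i _ => ?_
    congr 1
    rw [he]
    exact Finset.sum_congr rfl fun j _ => mul_comm _ _
  -- Rayleigh quotient in eigencoordinates
  have hRz : z ⬝ᵥ M *ᵥ z = ∑ i, μ i * c i ^ 2 := by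
    have h := b.sum_inner_mul_inner (WithLp.toLp 2 z) (WithLp.toLp 2 (M *ᵥ z))
    simp only [hinner, WithLp.ofLp_toLp] at h
    calc z ⬝ᵥ M *ᵥ z = ∑ j, z j * (M *ᵥ z) j := rfl
      _ = ∑ i, (∑ j, z j * b i j) * (∑ j, b i j * (M *ᵥ z) j) := h.symm
      _ = ∑ i, μ i * c i ^ 2 := by
          refine Finset.sum_congr rfl fun i _ => ?_
          rw [hsym z i]
          have : (∑ j, z j * b i j) = c i := by
            rw [hc]; exact Finset.sum_congr rfl fun j _ => mul_comm _ _
          rw [this]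
          ring
  -- eigen-coordinates of v
  have heigc : ∀ i, μ i * e i = lam * e i := by
    intro i
    have h2 : ∑ j, b i j * (M *ᵥ v) j = ∑ j, b i j * (lam • v) j := by rw [heig]
    rw [hsym v i] at h2
    have h3 : ∑ j, b i j * (lam • v) j = lam * ∑ j, b i j * v j := by
      rw [Finset.mul_sum]
      refine Finset.sum_congr rfl fun j _ => ?_
      simp [Pi.smul_apply, smul_eq_mul]
      ring
    rw [h3] at h2
    exact h2
  -- basic eigenvalue facts
  have hnn : ∀ i, 0 ≤ μ i := fun i => hM.eigenvalues_nonneg i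
  have hle : ∀ i, μ i ≤ lam := by
    intro i
    refine hmax (μ i) (b i) ?_ (h1 i)
    simpa using b.orthonormal.ne_zero i
  have hsumμ : ∑ i, μ i = 1 := by
    have htr2 : M.trace = ∑ i, μ i := by
      rw [hH.trace_eq_sum_eigenvalues]
      simp [hμ]
    rw [htr] at htr2
    exact htr2.symm
  -- z-Rayleigh quotient is at most lam, so lam is large
  have hRlam : z ⬝ᵥ M *ᵥ z ≤ lam := by
    rw [hRz]
    calc ∑ i, μ i * c i ^ 2 ≤ ∑ i, lam * c i ^ 2 :=
          Finset.sum_le_sum fun i _ => mul_le_mul_of_nonneg_right (hle i) (sq_nonneg _)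
      _ = lam * ∑ i, c i ^ 2 := (Finset.mul_sum _ _ _).symm
      _ = lam := by rw [hzc, mul_one]
  have hlamlb : 1 - ε ≤ lam := le_trans hzM hRlam
  have hlamhalf : (1:ℝ)/2 < lam := by linarith
  -- the index where v lives
  obtain ⟨i₀, hi₀⟩ : ∃ i, e i ≠ 0 := by
    by_contra hcon
    push_neg at hcon
    rw [Finset.sum_eq_zero (fun i _ => by rw [hcon i]; ring)] at hve
    exact zero_ne_one hve
  have hμi₀ : μ i₀ = lam := by
    have := heigc i₀
    rcases mul_eq_mul_right_iff.mp this with h | h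
    · exact h
    · exact absurd h hi₀
  have hpair : ∀ i, i ≠ i₀ → μ i + μ i₀ ≤ 1 := by
    intro i hne
    have hsub : ({i, i₀} : Finset (Fin d)) ⊆ Finset.univ := Finset.subset_univ _
    have h := Finset.sum_le_sum_of_subset_of_nonneg hsub (fun j _ _ => hnn j)
    rw [Finset.sum_pair hne, hsumμ] at h
    exact h
  have hlam1 : lam ≤ 1 := by
    rw [← hμi₀, ← hsumμ]
    exact Finset.single_le_sum (fun i _ => hnn i) (Finset.mem_univ i₀)
  have hμsmall : ∀ i, i ≠ i₀ → μ i ≤ 1 - lam := by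
    intro i hne
    have := hpair i hne
    rw [hμi₀] at this
    linarith
  have hezero : ∀ i, i ≠ i₀ → e i = 0 := by
    intro i hne
    have hlt : μ i ≠ lam := by
      have := hμsmall i hne
      intro hcon
      rw [hcon] at this
      linarith
    have := heigc i
    rcases mul_eq_mul_right_iff.mp this with h | h
    · exact absurd h hlt
    · exact h
  have hei₀ : e i₀ ^ 2 = 1 := by
    rw [← hve]
    symm
    apply Finset.sum_eq_single_of_mem i₀ (Finset.mem_univ i₀)
    intro i _ hne
    rw [hezero i hne]
    ring
  have halpha2 : (∑ i, v i * z i) ^ 2 = c i₀ ^ 2 := by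
    rw [halpha]
    have : ∑ i, e i * c i = e i₀ * c i₀ := by
      apply Finset.sum_eq_single_of_mem i₀ (Finset.mem_univ i₀)
      intro i _ hne
      rw [hezero i hne]
      ring
    rw [this, mul_pow, hei₀, one_mul]
  -- the spectral bound on the Rayleigh quotient
  set t := c i₀ ^ 2 with ht
  have htnn : 0 ≤ t := sq_nonneg _
  have hrest : ∑ i ∈ Finset.univ.erase i₀, c i ^ 2 = 1 - t := by
    have h := Finset.sum_erase_add Finset.univ (fun i => c i ^ 2) (Finset.mem_univ i₀)
    rw [hzc] at h
    linarith
  have hbound : z ⬝ᵥ M *ᵥ z ≤ lam * t + (1 - lam) * (1 - t) := by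
    rw [hRz]
    have h := Finset.sum_erase_add Finset.univ (fun i => μ i * c i ^ 2) (Finset.mem_univ i₀)
    have h2 : ∑ i ∈ Finset.univ.erase i₀, μ i * c i ^ 2 ≤ (1 - lam) * (1 - t) := by
      calc ∑ i ∈ Finset.univ.erase i₀, μ i * c i ^ 2
          ≤ ∑ i ∈ Finset.univ.erase i₀, (1 - lam) * c i ^ 2 :=
            Finset.sum_le_sum fun i hi =>
              mul_le_mul_of_nonneg_right (hμsmall i (Finset.ne_of_mem_erase hi)) (sq_nonneg _)
        _ = (1 - lam) * ∑ i ∈ Finset.univ.erase i₀, c i ^ 2 := (Finset.mul_sum _ _ _).symm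
        _ = (1 - lam) * (1 - t) := by rw [hrest]
    calc ∑ i, μ i * c i ^ 2
        = (∑ i ∈ Finset.univ.erase i₀, μ i * c i ^ 2) + μ i₀ * c i₀ ^ 2 := h.symm
      _ ≤ (1 - lam) * (1 - t) + lam * t := by rw [hμi₀]; exact add_le_add_left h2 _
      _ = lam * t + (1 - lam) * (1 - t) := by ring
  have hkey : 1 - ε ≤ lam * t + (1 - lam) * (1 - t) := le_trans hzM hbound
  rw [halpha2]
  nlinarith [mul_nonneg (sub_nonneg.2 hlam1) hε0, mul_nonneg (sub_nonneg.2 hlamlb) htnn,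
    mul_nonneg (sub_nonneg.2 hlamlb) hε0, mul_nonneg hε0 htnn,
    mul_nonneg (sub_nonneg.2 hlam1) htnn]
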